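/- Let M and M̃ be symmetric positive definite n×n matrices partitioned conformally into 2×2 blocks with invertible (1,1)-blocks. If e^{-ε} M̃ ⪯ M ⪯ e^{ε} M̃ in the Loewner order, then the Schur complements of M and M̃ onto the second block satisfy e^{-ε} Schur(M̃) ⪯ Schur(M) ⪯ e^{ε} Schur(M̃). -/

import Mathlib

open Matrix

lemma block11_posDef {n m : ℕ} {A : Matrix (Fin n) (Fin n) ℝ} {B : Matrix (Fin n) (Fin m) ℝ}
    {C : Matrix (Fin m) (Fin n) ℝ} {D : Matrix (Fin m) (Fin m) ℝ}
    (h : (fromBlocks A B C D).PosDef) : A.PosDef := by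
  refine .of_dotProduct_mulVec_pos (isHermitian_fromBlocks_iff.mp h.1).1 fun x hx => ?_
  have hv : (Sum.elim x (0 : Fin m → ℝ)) ≠ 0 := by
    intro h0
    apply hx
    funext i
    exact congrFun h0 (Sum.inl i)
  have := h.dotProduct_mulVec_pos hv
  simpa [fromBlocks_mulVec, dotProduct_block] using this

lemma isHermitian_smul' {k : ℕ} {A : Matrix (Fin k) (Fin k) ℝ} (hA : A.IsHermitian) (c : ℝ) :
    (c • A).IsHermitian := by
  unfold Matrix.IsHermitian
  rw [conjTranspose_smul, star_trivial, hA.eq]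

lemma posDef_smul {k : ℕ} {A : Matrix (Fin k) (Fin k) ℝ} (hA : A.PosDef) {c : ℝ} (hc : 0 < c) :
    (c • A).PosDef := by
  refine .of_dotProduct_mulVec_pos (isHermitian_smul' hA.1 c) fun x hx => ?_
  have := hA.dotProduct_mulVec_pos hx
  rw [smul_mulVec, dotProduct_smul, smul_eq_mul]
  exact mul_pos hc this

lemma schur_smul {n m : ℕ} (A : Matrix (Fin n) (Fin n) ℝ) (B : Matrix (Fin n) (Fin m) ℝ)
    (D : Matrix (Fin m) (Fin m) ℝ) (c : ℝ) (hc : 0 < c) (hA : IsUnit A.det) :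
    (c • D) - (c • B)ᴴ * (c • A)⁻¹ * (c • B) = c • (D - Bᴴ * A⁻¹ * B) := by
  have hinv : (c • A)⁻¹ = c⁻¹ • A⁻¹ := by
    apply inv_eq_right_inv
    rw [Matrix.smul_mul, Matrix.mul_smul, smul_smul, mul_nonsing_inv _ hA,
      mul_inv_cancel₀ hc.ne', one_smul]
  rw [hinv, conjTranspose_smul, star_trivial]
  simp only [Matrix.smul_mul, Matrix.mul_smul, smul_smul, smul_sub]
  rw [inv_mul_cancel₀ hc.ne', mul_one]

lemma schur_mono {n m : ℕ} {A A' : Matrix (Fin n) (Fin n) ℝ} {B B' : Matrix (Fin n) (Fin m) ℝ}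
    {D D' : Matrix (Fin m) (Fin m) ℝ}
    (hA : A.PosDef) (hA' : A'.PosDef) (hD : D.IsHermitian) (hD' : D'.IsHermitian)
    (h : (fromBlocks A B Bᴴ D - fromBlocks A' B' B'ᴴ D').PosSemidef) :
    ((D - Bᴴ * A⁻¹ * B) - (D' - B'ᴴ * A'⁻¹ * B')).PosSemidef := by
  haveI : Invertible A := hA.isUnit.invertible
  haveI : Invertible A' := hA'.isUnit.invertible
  refine .of_dotProduct_mulVec_nonneg ((hD.sub (isHermitian_conjTranspose_mul_mul _ hA.1.inv)).sub
    (hD'.sub (isHermitian_conjTranspose_mul_mul _ hA'.1.inv))) fun y => ?_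
  set x : Fin n → ℝ := -((A⁻¹ * B) *ᵥ y) with hxdef
  have hx0 : x + (A⁻¹ * B) *ᵥ y = 0 := neg_add_cancel _
  have e1 := schur_complement_eq₁₁ B D x y hA.1
  have e2 := schur_complement_eq₁₁ B' D' x y hA'.1
  rw [hx0] at e1
  simp only [star_zero, zero_vecMul, zero_dotProduct, zero_add] at e1
  have hv1 : star (Sum.elim x y) ⬝ᵥ (fromBlocks A B Bᴴ D *ᵥ Sum.elim x y) =
      star y ⬝ᵥ ((D - Bᴴ * A⁻¹ * B) *ᵥ y) := by
    rw [dotProduct_mulVec, dotProduct_mulVec]; exact e1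
  have hnn : 0 ≤ star (x + (A'⁻¹ * B') *ᵥ y) ᵥ* A' ⬝ᵥ (x + (A'⁻¹ * B') *ᵥ y) := by
    rw [← dotProduct_mulVec]; exact hA'.posSemidef.dotProduct_mulVec_nonneg _
  have hv2 : star y ⬝ᵥ ((D' - B'ᴴ * A'⁻¹ * B') *ᵥ y) ≤
      star (Sum.elim x y) ⬝ᵥ (fromBlocks A' B' B'ᴴ D' *ᵥ Sum.elim x y) := by
    rw [dotProduct_mulVec, dotProduct_mulVec, e2]
    exact le_add_of_nonneg_left hnn
  have key := h.dotProduct_mulVec_nonneg (Sum.elim x y)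
  rw [sub_mulVec, dotProduct_sub] at key
  rw [sub_mulVec, dotProduct_sub]
  rw [hv1] at key
  linarith

theorem stmt_6 (n m : ℕ)
    (M₁₁ Mt₁₁ : Matrix (Fin n) (Fin n) ℝ) (M₁₂ Mt₁₂ : Matrix (Fin n) (Fin m) ℝ)
    (M₂₁ Mt₂₁ : Matrix (Fin m) (Fin n) ℝ) (M₂₂ Mt₂₂ : Matrix (Fin m) (Fin m) ℝ)
    (hM : (Matrix.fromBlocks M₁₁ M₁₂ M₂₁ M₂₂).PosDef)
    (hMt : (Matrix.fromBlocks Mt₁₁ Mt₁₂ Mt₂₁ Mt₂₂).PosDef)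
    (h11 : IsUnit M₁₁) (ht11 : IsUnit Mt₁₁)
    (ε : ℝ) (hε : 0 ≤ ε)
    (h1 : (Matrix.fromBlocks M₁₁ M₁₂ M₂₁ M₂₂ -
        Real.exp (-ε) • Matrix.fromBlocks Mt₁₁ Mt₁₂ Mt₂₁ Mt₂₂).PosSemidef)
    (h2 : (Real.exp ε • Matrix.fromBlocks Mt₁₁ Mt₁₂ Mt₂₁ Mt₂₂ -
        Matrix.fromBlocks M₁₁ M₁₂ M₂₁ M₂₂).PosSemidef) :
    ((M₂₂ - M₂₁ * M₁₁⁻¹ * M₁₂) - Real.exp (-ε) • (Mt₂₂ - Mt₂₁ * Mt₁₁⁻¹ * Mt₁₂)).PosSemidef ∧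
      (Real.exp ε • (Mt₂₂ - Mt₂₁ * Mt₁₁⁻¹ * Mt₁₂) - (M₂₂ - M₂₁ * M₁₁⁻¹ * M₁₂)).PosSemidef := by
  obtain ⟨hA, -, hB, hD⟩ := isHermitian_fromBlocks_iff.mp hM.1
  obtain ⟨htA, -, htB, htD⟩ := isHermitian_fromBlocks_iff.mp hMt.1
  have hApd : M₁₁.PosDef := block11_posDef hM
  have htApd : Mt₁₁.PosDef := block11_posDef hMt
  have hB' : M₂₁ = M₁₂ᴴ := by rw [← hB, conjTranspose_conjTranspose]
  have htB' : Mt₂₁ = Mt₁₂ᴴ := by rw [← htB, conjTranspose_conjTranspose]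
  rw [hB', htB'] at h1 h2 ⊢
  have hc1 : (0:ℝ) < Real.exp (-ε) := Real.exp_pos _
  have hc2 : (0:ℝ) < Real.exp ε := Real.exp_pos _
  have htdet : IsUnit Mt₁₁.det := (Matrix.isUnit_iff_isUnit_det _).mp ht11
  constructor
  · have h1' : (fromBlocks M₁₁ M₁₂ M₁₂ᴴ M₂₂ -
        fromBlocks (Real.exp (-ε) • Mt₁₁) (Real.exp (-ε) • Mt₁₂)
          (Real.exp (-ε) • Mt₁₂)ᴴ (Real.exp (-ε) • Mt₂₂)).PosSemidef := by
      rw [conjTranspose_smul, star_trivial, ← fromBlocks_smul]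
      exact h1
    have := schur_mono hApd (posDef_smul htApd hc1) hD (isHermitian_smul' htD _) h1'
    rwa [schur_smul Mt₁₁ Mt₁₂ Mt₂₂ _ hc1 htdet] at this
  · have h2' : (fromBlocks (Real.exp ε • Mt₁₁) (Real.exp ε • Mt₁₂)
          (Real.exp ε • Mt₁₂)ᴴ (Real.exp ε • Mt₂₂) -
        fromBlocks M₁₁ M₁₂ M₁₂ᴴ M₂₂).PosSemidef := by
      rw [conjTranspose_smul, star_trivial, ← fromBlocks_smul]
      exact h2
    have := schur_mono (posDef_smul htApd hc2) hApd (isHermitian_smul' htD _) hD h2'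
    rwa [schur_smul Mt₁₁ Mt₁₂ Mt₂₂ _ hc2 htdet] at this
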